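/- For every real x ≥ 0, 1 - Φ(x) < 2φ(x)/(√(2 + x²) + x) (Komatu's upper bound). -/

import Mathlib

open MeasureTheory Real

/-- Standard Gaussian density. -/
noncomputable def gaussPdf (x : ℝ) : ℝ := Real.exp (-x ^ 2 / 2) / Real.sqrt (2 * Real.pi)

/-- Standard Gaussian distribution function. -/
noncomputable def gaussCdf (x : ℝ) : ℝ := ∫ t in Set.Iic x, gaussPdf t

/-- Finite continued fraction `hcf k g x = x + 1/(x + 2/(⋯ + k/(g x)))`,
with `hcf 0 g = g`. -/
noncomputable def hcf : ℕ → (ℝ → ℝ) → ℝ → ℝ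
  | 0, g => g
  | (k + 1), g => hcf k (fun x => x + ((k : ℝ) + 1) / g x)

lemma sqrt2pi_pos : (0:ℝ) < Real.sqrt (2 * Real.pi) :=
  Real.sqrt_pos.2 (by positivity)

lemma gaussPdf_pos (t : ℝ) : 0 < gaussPdf t :=
  div_pos (Real.exp_pos _) sqrt2pi_pos

lemma gaussPdf_eq (t : ℝ) : gaussPdf t = Real.exp (-(1/2) * t ^ 2) / Real.sqrt (2 * Real.pi) := by
  unfold gaussPdf; ring_nf

lemma integrable_gaussPdf : Integrable gaussPdf := by
  have h := (integrable_exp_neg_mul_sq (by norm_num : (0:ℝ) < 1/2)).div_const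
    (Real.sqrt (2 * Real.pi))
  exact h.congr (Filter.Eventually.of_forall fun t => (gaussPdf_eq t).symm)

lemma integral_gaussPdf : ∫ t, gaussPdf t = 1 := by
  have h : ∫ t, gaussPdf t = (∫ t : ℝ, Real.exp (-(1/2) * t ^ 2)) / Real.sqrt (2 * Real.pi) := by
    rw [← integral_div]
    exact integral_congr_ae (Filter.Eventually.of_forall fun t => gaussPdf_eq t)
  rw [h, integral_gaussian]
  rw [show Real.pi / (1/2) = 2 * Real.pi by ring]
  exact div_self sqrt2pi_pos.ne'

lemma hasDerivAt_gaussPdf (t : ℝ) : HasDerivAt gaussPdf (-t * gaussPdf t) t := by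
  have h1 : HasDerivAt (fun s : ℝ => -s ^ 2 / 2) (-t) t := by
    have := ((hasDerivAt_pow 2 t).neg).div_const 2
    simpa using this.congr_deriv (by ring)
  have h2 := h1.exp.div_const (Real.sqrt (2 * Real.pi))
  refine h2.congr_deriv ?_
  unfold gaussPdf; ring

noncomputable def gK (t : ℝ) : ℝ := gaussPdf t * (Real.sqrt (t ^ 2 + 2) - t)

noncomputable def dK (t : ℝ) : ℝ :=
  -t * gaussPdf t * (Real.sqrt (t ^ 2 + 2) - t)
    + gaussPdf t * (t / Real.sqrt (t ^ 2 + 2) - 1)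

lemma sqrt_sq_add_two_pos (t : ℝ) : 0 < Real.sqrt (t ^ 2 + 2) :=
  Real.sqrt_pos.2 (by positivity)

lemma hasDerivAt_gK (t : ℝ) : HasDerivAt gK (dK t) t := by
  have hs : HasDerivAt (fun s : ℝ => Real.sqrt (s ^ 2 + 2))
      ((2 * t) / (2 * Real.sqrt (t ^ 2 + 2))) t := by
    have h0 : HasDerivAt (fun s : ℝ => s ^ 2 + 2) (2 * t) t := by
      simpa using (hasDerivAt_pow 2 t).add_const 2
    exact h0.sqrt (by positivity)
  have h := (hasDerivAt_gaussPdf t).mul (hs.sub (hasDerivAt_id t))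
  refine h.congr_deriv ?_
  unfold dK
  have hpos := sqrt_sq_add_two_pos t
  simp only [Pi.sub_apply, id]
  field_simp

lemma key_ineq {t : ℝ} (ht : 0 < t) : gaussPdf t < -dK t := by
  have hpos := sqrt_sq_add_two_pos t
  have hsq : Real.sqrt (t ^ 2 + 2) ^ 2 = t ^ 2 + 2 := Real.sq_sqrt (by positivity)
  set s := Real.sqrt (t ^ 2 + 2) with hs
  have hts : t * s < t ^ 2 + 1 := by nlinarith [sq_nonneg (t * s - (t ^ 2 + 1))]
  have hφ := gaussPdf_pos t
  have h2 : t / s < t * s - t ^ 2 := by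
    rw [div_lt_iff₀ hpos]; nlinarith
  have h3 : 0 < gaussPdf t * ((t * s - t ^ 2) - t / s) :=
    mul_pos hφ (by linarith)
  unfold dK
  rw [← hs]
  nlinarith [h3]

lemma gaussPdf_tendsto : Filter.Tendsto gaussPdf Filter.atTop (nhds 0) := by
  have h1 : Filter.Tendsto (fun t : ℝ => -t ^ 2 / 2) Filter.atTop Filter.atBot := by
    apply Filter.Tendsto.atBot_div_const (by norm_num)
    exact Filter.tendsto_neg_atBot_iff.2 (Filter.tendsto_pow_atTop (by norm_num))
  have h2 := Real.tendsto_exp_atBot.comp h1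
  have h3 : Filter.Tendsto (fun t : ℝ => Real.exp (-t ^ 2 / 2) / Real.sqrt (2 * Real.pi))
      Filter.atTop (nhds 0) := by
    simpa only [Function.comp_def, zero_div] using h2.div_const (Real.sqrt (2 * Real.pi))
  exact h3

lemma gK_tendsto : Filter.Tendsto gK Filter.atTop (nhds 0) := by
  have hb : ∀ᶠ t in Filter.atTop, |gK t| ≤ 2 * gaussPdf t := by
    filter_upwards [Filter.eventually_ge_atTop (0:ℝ)] with t ht
    have hpos := sqrt_sq_add_two_pos t
    have hφ := gaussPdf_pos t
    have hge : t ≤ Real.sqrt (t ^ 2 + 2) := by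
      rw [show t ^ 2 = t * t from sq t] at *
      nlinarith [Real.sq_sqrt (show (0:ℝ) ≤ t * t + 2 by nlinarith),
        Real.sqrt_nonneg (t * t + 2)]
    have hle : Real.sqrt (t ^ 2 + 2) ≤ t + 2 := by
      rw [show t + 2 = Real.sqrt ((t + 2) ^ 2) by rw [Real.sqrt_sq (by linarith)]]
      exact Real.sqrt_le_sqrt (by nlinarith)
    rw [abs_of_nonneg (by unfold gK; nlinarith)]
    unfold gK; nlinarith
  have h0 : Filter.Tendsto (fun t : ℝ => 2 * gaussPdf t) Filter.atTop (nhds 0) := by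
    simpa using gaussPdf_tendsto.const_mul 2
  exact squeeze_zero_norm' hb h0


/-- Komatu's upper bound. -/
theorem komatu_upper_bound (x : ℝ) (hx : 0 ≤ x) :
    1 - gaussCdf x < 2 * gaussPdf x / (Real.sqrt (2 + x ^ 2) + x) := by
  have hderiv : ∀ t ∈ Set.Ioi x, HasDerivAt gK (dK t) t := fun t _ => hasDerivAt_gK t
  have hneg : ∀ t ∈ Set.Ioi x, dK t ≤ 0 := by
    intro t ht
    have h1 := key_ineq (lt_of_le_of_lt hx ht)
    have h2 := gaussPdf_pos t
    linarith
  have hcont : ContinuousWithinAt gK (Set.Ici x) x :=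
    (hasDerivAt_gK x).continuousAt.continuousWithinAt
  have hint : ∫ t in Set.Ioi x, dK t = 0 - gK x :=
    integral_Ioi_of_hasDerivAt_of_nonpos hcont hderiv hneg gK_tendsto
  have hintOn : IntegrableOn dK (Set.Ioi x) :=
    integrableOn_Ioi_deriv_of_nonpos hcont hderiv hneg gK_tendsto
  have hnegint : IntegrableOn (fun t => -dK t) (Set.Ioi x) := hintOn.neg
  have hφint : IntegrableOn gaussPdf (Set.Ioi x) := integrable_gaussPdf.integrableOn
  have htail : 1 - gaussCdf x = ∫ t in Set.Ioi x, gaussPdf t := by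
    have h := intervalIntegral.integral_Iic_add_Ioi (f := gaussPdf) (b := x) (μ := volume)
      integrable_gaussPdf.integrableOn integrable_gaussPdf.integrableOn
    rw [integral_gaussPdf] at h
    unfold gaussCdf
    linarith
  have hstrict : 0 < ∫ t in Set.Ioi x, (-dK t - gaussPdf t) := by
    rw [setIntegral_pos_iff_support_of_nonneg_ae (f := fun t => -dK t - gaussPdf t)]
    · apply lt_of_lt_of_le _ (measure_mono (Set.subset_inter_iff.2 ⟨?_, Set.Subset.rfl⟩))
      · rw [Real.volume_Ioi]; exact ENNReal.zero_lt_top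
      · intro t ht
        have h1 := key_ineq (lt_of_le_of_lt hx ht)
        simp only [Function.mem_support]
        intro h
        linarith [h]
    · filter_upwards [ae_restrict_mem measurableSet_Ioi] with t ht
      have := key_ineq (lt_of_le_of_lt hx ht)
      simp only [Pi.zero_apply]; linarith
    · exact hnegint.sub hφint
  have heq : ∫ t in Set.Ioi x, (-dK t - gaussPdf t) = gK x - ∫ t in Set.Ioi x, gaussPdf t := by
    rw [MeasureTheory.integral_sub hnegint hφint, MeasureTheory.integral_neg, hint]
    ring
  have hlt : 1 - gaussCdf x < gK x := by rw [htail]; linarith [heq ▸ hstrict]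
  have hpos := sqrt_sq_add_two_pos x
  have hsq : Real.sqrt (x ^ 2 + 2) ^ 2 = x ^ 2 + 2 := Real.sq_sqrt (by positivity)
  have hxc : Real.sqrt (2 + x ^ 2) = Real.sqrt (x ^ 2 + 2) := by rw [add_comm]
  rw [hxc]
  have hden : 0 < Real.sqrt (x ^ 2 + 2) + x := by linarith
  have hfin : 2 * gaussPdf x / (Real.sqrt (x ^ 2 + 2) + x) = gK x := by
    unfold gK
    rw [div_eq_iff hden.ne']
    nlinarith [gaussPdf_pos x]
  rw [hfin]
  exact hlt
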